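/- (Proposition 4.3 for Lebesgue spaces.) Let (X, μ) be a measure space, H a complex Hilbert space, ψ : X → H weakly measurable, and 1 ≤ r < ∞. Define C_ψ f : X → ℂ by (C_ψ f)(x) = ⟨f, ψ_x⟩ and D_r(C_ψ) = { f ∈ H : C_ψ f ∈ L^r(X, μ) }. Then C_ψ : D_r(C_ψ) → L^r(X, μ) is a closed linear map: if f_n → f in H, each f_n ∈ D_r(C_ψ), and C_ψ f_n converges in the L^r norm to some ξ ∈ L^r(X, μ), then f ∈ D_r(C_ψ) and C_ψ f = ξ μ-almost everywhere. -/

import Mathlib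

open MeasureTheory Filter
open scoped ENNReal NNReal Topology

local notation "⟪" x ", " y "⟫" => @inner ℂ _ _ x y

/-- Proposition 4.3 for Lebesgue spaces: For weakly measurable
`ψ : X → H` and `1 ≤ r < ∞`, the analysis map `C_ψ : D_r(C_ψ) → L^r(X, μ)` is closed:
if `f_n → f` in `H`, each `C_ψ f_n ∈ L^r`, and `C_ψ f_n → ξ` in the `L^r` norm with
`ξ ∈ L^r`, then `C_ψ f ∈ L^r` and `C_ψ f = ξ` μ-a.e. -/
theorem statement7
    {X : Type*} [MeasurableSpace X] (μ : Measure X)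
    {H : Type*} [NormedAddCommGroup H] [InnerProductSpace ℂ H] [CompleteSpace H]
    (ψ : X → H)
    (hψmeas : ∀ f : H, Measurable fun x => ⟪ψ x, f⟫)
    (r : ℝ≥0∞) (hr1 : 1 ≤ r) (hr2 : r ≠ ∞)
    (f : H) (fseq : ℕ → H)
    (hmem : ∀ n, MemLp (fun x => ⟪ψ x, fseq n⟫) r μ)
    (hfH : Tendsto fseq atTop (𝓝 f))
    (ξ : X → ℂ) (hξ : MemLp ξ r μ)
    (hLr : Tendsto (fun n => eLpNorm (fun x => ⟪ψ x, fseq n⟫ - ξ x) r μ) atTop (𝓝 0)) :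
    MemLp (fun x => ⟪ψ x, f⟫) r μ ∧ (fun x => ⟪ψ x, f⟫) =ᵐ[μ] ξ := by
  have hr0 : r ≠ 0 := fun h => by simp [h] at hr1
  have hmeas : TendstoInMeasure μ (fun n x => ⟪ψ x, fseq n⟫) atTop ξ :=
    tendstoInMeasure_of_tendsto_eLpNorm hr0 (fun n => (hmem n).aestronglyMeasurable)
      hξ.aestronglyMeasurable hLr
  obtain ⟨ns, hns, hae⟩ := hmeas.exists_seq_tendsto_ae
  have hpt : ∀ x, Tendsto (fun i => ⟪ψ x, fseq (ns i)⟫) atTop (𝓝 ⟪ψ x, f⟫) := by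
    intro x
    exact ((continuous_inner.comp (Continuous.prodMk_right (ψ x))).tendsto f).comp
      (hfH.comp hns.tendsto_atTop)
  have heq : (fun x => ⟪ψ x, f⟫) =ᵐ[μ] ξ := by
    filter_upwards [hae] with x hx
    exact tendsto_nhds_unique (hpt x) hx
  exact ⟨hξ.ae_eq heq.symm, heq⟩
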